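/- There exist nonzero complex numbers ξ and η such that the set {ξ^m · η^n : m, n ∈ ℤ} is dense in ℂ and H(ξ,η) equals the whole unit circle {z ∈ ℂ : |z| = 1}. -/

import Mathlib

open Filter Topology

namespace SecondAux

noncomputable def nseq (r s τ : ℕ → ℝ) : ℕ → ℝ
  | 0 => 0
  | k+1 => ((⌈r (k+1) * nseq r s τ k + s (k+1)⌉ : ℝ) - s (k+1) + τ (k+1)) / r (k+1)

theorem nested (r s τ : ℕ → ℝ) (hr : ∀ k, 1 ≤ r (k+1))
    (hτ0 : ∀ k, 0 < τ (k+1)) (hτ1 : ∀ k, τ (k+1) ≤ 1/2)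
    (hgrow : ∀ k, 2 / r (k+2) ≤ τ (k+1) / r (k+1)) :
    ∃ x : ℝ, 0 ≤ x ∧ x ≤ 2 / r 1 ∧
      ∀ k, ∃ Z : ℤ, r (k+1) * x + s (k+1) - Z ∈ Set.Icc (τ (k+1)) (2 * τ (k+1)) := by
  set c := nseq r s τ with hc
  have hrpos : ∀ k, (0:ℝ) < r (k+1) := fun k => lt_of_lt_of_le one_pos (hr k)
  have key : ∀ k, r (k+1) * c (k+1) + s (k+1)
      = (⌈r (k+1) * c k + s (k+1)⌉ : ℝ) + τ (k+1) := by
    intro k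
    have h : c (k+1) = ((⌈r (k+1) * c k + s (k+1)⌉ : ℝ) - s (k+1) + τ (k+1)) / r (k+1) := rfl
    rw [h, mul_div_cancel₀ _ (ne_of_gt (hrpos k))]
    ring
  have mono : ∀ k, c k ≤ c (k+1) := by
    intro k
    have hk := key k
    have h1 : (r (k+1) * c k + s (k+1)) ≤ (⌈r (k+1) * c k + s (k+1)⌉ : ℝ) := Int.le_ceil _
    nlinarith [hrpos k, hτ0 k]
  have cmono : Monotone c := monotone_nat_of_le_succ mono
  set u : ℕ → ℝ := fun k => c (k+1) + τ (k+1) / r (k+1) with hu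
  have c_le_u : ∀ k, c (k+1) ≤ u k := by
    intro k
    have : 0 ≤ τ (k+1) / r (k+1) := le_of_lt (div_pos (hτ0 k) (hrpos k))
    simp only [hu]; linarith
  have ustep : ∀ k, u (k+1) ≤ u k := by
    intro k
    have hk := key (k+1)
    have h1 : (⌈r (k+2) * c (k+1) + s (k+2)⌉ : ℝ) < (r (k+2) * c (k+1) + s (k+2)) + 1 :=
      Int.ceil_lt_add_one _
    have h2 : r (k+2) * c (k+2) < r (k+2) * c (k+1) + 1 + τ (k+2) := by linarith
    have h3 : c (k+2) - c (k+1) ≤ (1 + τ (k+2)) / r (k+2) := by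
      rw [le_div_iff₀ (hrpos (k+1))]
      ring_nf
      ring_nf at h2
      linarith
    have h4 : (1 + τ (k+2)) / r (k+2) + τ (k+2) / r (k+2) ≤ 2 / r (k+2) := by
      rw [← add_div]
      gcongr
      · exact le_of_lt (hrpos (k+1))
      · linarith [hτ1 (k+1)]
    have h5 := hgrow k
    show c (k+2) + τ (k+2) / r (k+2) ≤ c (k+1) + τ (k+1) / r (k+1)
    linarith
  have uanti : Antitone u := antitone_nat_of_succ_le ustep
  have hbdd : BddAbove (Set.range c) := by
    refine ⟨u 0, ?_⟩
    rintro x ⟨j, rfl⟩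
    match j with
    | 0 =>
      calc c 0 ≤ c 1 := mono 0
        _ ≤ u 0 := c_le_u 0
    | (i+1) =>
      calc c (i+1) ≤ u i := c_le_u i
        _ ≤ u 0 := uanti (Nat.zero_le i)
  set x := ⨆ k, c k with hx
  have hx_ge : ∀ k, c k ≤ x := fun k => le_ciSup hbdd k
  have hx_le : ∀ k, x ≤ u k := by
    intro k
    refine ciSup_le fun j => ?_
    rcases le_or_gt j (k+1) with h | h
    · exact le_trans (cmono h) (c_le_u k)
    · obtain ⟨i, rfl⟩ : ∃ i, j = i + 1 := ⟨j - 1, by omega⟩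
      exact le_trans (c_le_u i) (uanti (by omega))
  have hc0 : c 0 = 0 := rfl
  refine ⟨x, by rw [← hc0]; exact hx_ge 0, ?_, ?_⟩
  · have h1 : x ≤ u 0 := hx_le 0
    have hk := key 0
    have h2 : (⌈r 1 * c 0 + s 1⌉ : ℝ) < (r 1 * c 0 + s 1) + 1 := Int.ceil_lt_add_one _
    rw [hc0] at h2
    have h3 : r 1 * c 1 ≤ 1 + τ 1 := by
      rw [hc0] at hk; linarith
    have h4 : c 1 ≤ (1 + τ 1) / r 1 := by
      rw [le_div_iff₀ (hrpos 0)]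
      ring_nf; ring_nf at h3; linarith
    have h5 : (1 + τ 1) / r 1 + τ 1 / r 1 ≤ 2 / r 1 := by
      rw [← add_div]
      gcongr
      · exact le_of_lt (hrpos 0)
      · linarith [hτ1 0]
    have : u 0 = c 1 + τ 1 / r 1 := rfl
    linarith [this ▸ h1]
  · intro k
    refine ⟨⌈r (k+1) * c k + s (k+1)⌉, ?_, ?_⟩
    · have h1 : c (k+1) ≤ x := hx_ge (k+1)
      have hk := key k
      have := mul_le_mul_of_nonneg_left h1 (le_of_lt (hrpos k))
      linarith
    · have h1 : x ≤ u k := hx_le k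
      have hk := key k
      have h2 : r (k+1) * x ≤ r (k+1) * c (k+1) + τ (k+1) := by
        have h3 := mul_le_mul_of_nonneg_left h1 (le_of_lt (hrpos k))
        have h4 : r (k+1) * (τ (k+1) / r (k+1)) = τ (k+1) := by
          rw [mul_comm, div_mul_cancel₀ _ (ne_of_gt (hrpos k))]
        have h5 : r (k+1) * u k = r (k+1) * c (k+1) + τ (k+1) := by
          simp only [hu]; rw [mul_add, h4]
        linarith
      linarith


lemma le_inv_pow {x : ℝ} (hx : 1 ≤ x) {a b c : ℕ} (h : a + c ≤ b) :
    x ^ a * (x ^ b)⁻¹ ≤ (x ^ c)⁻¹ := by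
  have hx0 : (0:ℝ) < x := lt_of_lt_of_le one_pos hx
  rw [← div_eq_mul_inv, div_le_iff₀ (pow_pos hx0 b), inv_mul_eq_div,
    le_div_iff₀ (pow_pos hx0 c), ← pow_add]
  exact pow_le_pow_right₀ hx h

lemma round_le_abs (x : ℝ) : |(round x : ℝ)| ≤ |x| + 1/2 := by
  calc |(round x:ℝ)| = |x + ((round x:ℝ) - x)| := by ring_nf
    _ ≤ |x| + |(round x:ℝ) - x| := abs_add_le _ _
    _ = |x| + |x - (round x:ℝ)| := by rw [abs_sub_comm]
    _ ≤ |x| + 1/2 := by linarith [abs_sub_round x]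

lemma tendsto_geo {c : ℝ} (hc : 1 < c) (C : ℝ) (f : ℕ → ℝ)
    (h : ∀ k, |f k| ≤ C * (c ^ k)⁻¹) : Tendsto f atTop (𝓝 0) := by
  apply squeeze_zero_norm (by simpa [Real.norm_eq_abs] using h)
  have h4 : ∀ k : ℕ, (c ^ k)⁻¹ = (1/c : ℝ) ^ k := by
    intro k; rw [one_div, inv_pow]
  have hc0 : (0:ℝ) < c := lt_trans one_pos hc
  have := (tendsto_pow_atTop_nhds_zero_of_lt_one
    (by positivity : (0:ℝ) ≤ 1/c) (by rw [div_lt_one hc0]; exact hc)).const_mul C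
  rw [mul_zero] at this
  simpa only [h4] using this

lemma texp (f g : ℕ → ℝ) (F G : ℝ) (hf : Tendsto f atTop (𝓝 F)) (hg : Tendsto g atTop (𝓝 G)) :
    Tendsto (fun k => Complex.exp (↑(f k) + ↑(g k) * Complex.I)) atTop
      (𝓝 (Complex.exp (↑F + ↑G * Complex.I))) := by
  have h1 : Tendsto (fun k => (↑(f k) + ↑(g k) * Complex.I : ℂ)) atTop
      (𝓝 (↑F + ↑G * Complex.I)) :=
    ((Complex.continuous_ofReal.tendsto F).comp hf).add
      (((Complex.continuous_ofReal.tendsto G).comp hg).mul_const Complex.I)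
  exact (Complex.continuous_exp.tendsto _).comp h1

lemma fact_grow (n a : ℕ) (h : a ≤ (n+6)^2) : Nat.factorial (n+6) + a + 1 ≤ Nat.factorial (n+7) := by
  have h1 : (n+6) * (n+5) ≤ Nat.factorial (n+6) := by
    calc (n+6) * (n+5) ≤ (n+6) * Nat.factorial (n+5) := Nat.mul_le_mul_left _ (Nat.self_le_factorial _)
      _ = Nat.factorial (n+6) := (Nat.factorial_succ (n+5)).symm
  have h2 : Nat.factorial (n+7) = (n+7) * Nat.factorial (n+6) := Nat.factorial_succ (n+6)
  nlinarith [sq_nonneg (n+6), Nat.factorial_pos (n+6)]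

lemma one_le_pow4 (n : ℕ) : (1:ℝ) ≤ 4 ^ n := by
  calc (1:ℝ) = 4 ^ 0 := by norm_num
    _ ≤ 4 ^ n := pow_le_pow_right₀ (by norm_num) (Nat.zero_le _)

lemma pow4_mono {a b : ℕ} (h : a ≤ b) : (4:ℝ) ^ a ≤ 4 ^ b :=
  pow_le_pow_right₀ (by norm_num) h

lemma gamma_exists : ∃ γ : ℝ, 1/4 ≤ γ ∧ γ ≤ 1/2 ∧
    ∀ k, ∃ A : ℤ, 1 ≤ (A:ℝ) ∧ (A:ℝ) ≤ (4:ℝ)^(Nat.factorial (k+6)) / 2 ∧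
      (4:ℝ)^(Nat.factorial (k+6)) * γ - A ∈
        Set.Icc (((4:ℝ)^((k+6)^2))⁻¹) (2 * ((4:ℝ)^((k+6)^2))⁻¹) := by
  obtain ⟨x, hx0, hx2, hspec⟩ := nested (fun k => (4:ℝ)^(Nat.factorial (k+5)))
      (fun _ => 0) (fun k => ((4:ℝ)^((k+5)^2))⁻¹)
      (fun k => one_le_pow4 _)
      (fun k => inv_pos.mpr (pow_pos (by norm_num) _))
      (fun k => by
        rw [show (1/2:ℝ) = (2:ℝ)⁻¹ by norm_num]
        apply inv_anti₀ (by norm_num)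
        calc (2:ℝ) ≤ 4 ^ 1 := by norm_num
          _ ≤ _ := pow4_mono (Nat.one_le_pow _ _ (by omega)))
      (fun k => by
        have hrw : ((4:ℝ)^((k+1+5)^2))⁻¹ / 4^(Nat.factorial (k+1+5))
            = ((4:ℝ)^(Nat.factorial (k+6) + (k+6)^2))⁻¹ := by
          rw [division_def, pow_add, mul_inv]
          ring_nf
        rw [hrw, div_le_iff₀ (pow_pos (by norm_num) _), inv_mul_eq_div,
          le_div_iff₀ (pow_pos (by norm_num) _)]
        calc (2:ℝ) * 4 ^ (Nat.factorial (k+6) + (k+6)^2)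
            ≤ 4 * 4 ^ (Nat.factorial (k+6) + (k+6)^2) := by
              have := pow_pos (by norm_num : (0:ℝ) < 4) (Nat.factorial (k+6) + (k+6)^2)
              linarith
          _ = 4 ^ (Nat.factorial (k+6) + (k+6)^2 + 1) := by rw [pow_succ]; ring
          _ ≤ 4 ^ (Nat.factorial (k+2+5)) := pow4_mono (fact_grow k _ (le_refl _)))
  have hx14 : x ≤ 1/4 := by
    refine le_trans hx2 ?_
    have h8 : (8:ℝ) ≤ 4 ^ Nat.factorial (1+5) := by
      calc (8:ℝ) ≤ 4^2 := by norm_num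
        _ ≤ _ := pow4_mono (by norm_num [Nat.factorial])
    rw [div_le_div_iff₀ (pow_pos (by norm_num) _) (by norm_num)]
    nlinarith
  refine ⟨1/4 + x, by linarith, by linarith, fun k => ?_⟩
  obtain ⟨Z, hZ⟩ := hspec k
  rw [Set.mem_Icc] at hZ
  norm_num at hZ
  obtain ⟨hZ1, hZ2⟩ := hZ
  have hτ1 : ((4:ℝ)^((k+1+5)^2))⁻¹ ≤ 1 := by
    rw [inv_le_one_iff₀]
    right; exact one_le_pow4 _
  have hτ0 : (0:ℝ) < ((4:ℝ)^((k+1+5)^2))⁻¹ := inv_pos.mpr (pow_pos (by norm_num) _)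
  have hfpos := Nat.factorial_pos (k+6)
  have hp : (4:ℝ)^(Nat.factorial (k+6)) = 4^(Nat.factorial (k+6) - 1) * 4 := by
    rw [← pow_succ]
    congr 1
    omega
  simp only [show k+1+5 = k+6 from rfl] at hZ1 hZ2
  have hf2 : 2 ≤ Nat.factorial (k+6) := le_trans (by omega) (Nat.self_le_factorial (k+6))
  have h4m1 : (4:ℝ) ≤ 4 ^ (Nat.factorial (k+6) - 1) := by
    calc (4:ℝ) = 4^1 := by norm_num
      _ ≤ _ := pow4_mono (by omega)
  have hx4 : (0:ℝ) ≤ 4 ^ Nat.factorial (k+6) * x := mul_nonneg (by positivity) hx0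
  have hxq : (4:ℝ) ^ Nat.factorial (k+6) * x ≤ 4 ^ Nat.factorial (k+6) * (1/4) :=
    mul_le_mul_of_nonneg_left hx14 (by positivity)
  have hexp : (4:ℝ) ^ Nat.factorial (k+6) * (1/4 + x)
      = 4 ^ (Nat.factorial (k+6) - 1) + 4 ^ Nat.factorial (k+6) * x := by
    rw [hp]; ring
  refine ⟨(4:ℤ)^(Nat.factorial (k+6) - 1) + Z, ?_, ?_, ?_, ?_⟩
  · push_cast
    linarith
  · push_cast
    linarith [hp]
  · push_cast
    linarith [hexp, hZ1]
  · push_cast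
    linarith [hexp, hZ2]

set_option maxHeartbeats 2000000 in
theorem construction : ∃ ξ η : ℂ, ξ ≠ 0 ∧ η ≠ 0 ∧
    Dense {z : ℂ | ∃ m n : ℤ, z = ξ ^ m * η ^ n} ∧
    (∀ z : ℂ, ‖z‖ = 1 → ∃ n m : ℕ → ℤ,
      Tendsto (fun k => ξ ^ (n k) * η ^ (m k)) atTop (𝓝 1) ∧
      Tendsto (fun k => (ξ / (‖ξ‖ : ℂ)) ^ (n k)) atTop (𝓝 z)) := by
  obtain ⟨γ, hγ1, hγ2, hspec⟩ := gamma_exists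
  choose A hA1 hA2 hA3 using hspec
  set Br : ℕ → ℝ := fun k => (4:ℝ)^(Nat.factorial (k+6)) with hBrdef
  set τε : ℕ → ℝ := fun k => ((4:ℝ)^((k+6)^2))⁻¹ with hτεdef
  have hBr16 : ∀ k, (16:ℝ) ≤ Br k := by
    intro k
    calc (16:ℝ) = 4^2 := by norm_num
      _ ≤ _ := pow4_mono (le_trans (by omega) (Nat.self_le_factorial (k+6)))
  have hBrpos : ∀ k, (0:ℝ) < Br k := fun k => by positivity
  have hτε1 : ∀ k, τε k ≤ 1 := by
    intro k
    rw [hτεdef]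
    simp only
    rw [inv_le_one_iff₀]
    right; exact one_le_pow4 _
  have hτεpos : ∀ k, 0 < τε k := fun k => inv_pos.mpr (pow_pos (by norm_num) _)
  have hε1 : ∀ k, 0 < Br k * γ - A k := fun k => lt_of_lt_of_le (hτεpos k) (hA3 k).1
  have hε2 : ∀ k, Br k * γ - A k ≤ 2 * τε k := fun k => (hA3 k).2
  have hAlb : ∀ k, Br k / 8 ≤ (A k : ℝ) := by
    intro k
    have h1 := hε2 k
    have h2 := hτε1 k
    have h3 := hBr16 k
    nlinarith [hγ1]
  have hApos : ∀ k, (0:ℝ) < (A k : ℝ) := fun k => lt_of_lt_of_le one_pos (hA1 k)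
  -- growth facts
  have hBrgrow : ∀ (k : ℕ) (a : ℕ), a ≤ (k+6)^2 → (4:ℝ)^(a+1) * Br k ≤ Br (k+1) := by
    intro k a ha
    rw [hBrdef]
    simp only
    rw [← pow_add]
    apply pow4_mono
    have := fact_grow k a ha
    simp only [show k+1+6 = k+7 from rfl]
    omega
  have hAgrow : ∀ k, 2 * (2:ℝ)^(k+1) * (A k : ℝ) ≤ (A (k+1) : ℝ) := by
    intro k
    have h1 : (2:ℝ)^(k+1) ≤ 4^(k+1) := pow_le_pow_left₀ (by norm_num) (by norm_num) _
    have h2 := hA2 k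
    have h3 := hAlb (k+1)
    have h4 : (4:ℝ)^(k+2+1) * Br k ≤ Br (k+1) := hBrgrow k (k+2)
      (by have e2 : (k+6)^2 = k*k+12*k+36 := by ring
          omega)
    have h5 : (4:ℝ)^(k+2+1) = 4^(k+1) * 16 := by rw [pow_succ, pow_succ]; ring
    have h6 : (0:ℝ) ≤ (2:ℝ)^(k+1) := by positivity
    have h7 : (0:ℝ) < (4:ℝ)^(k+1) := by positivity
    have h8 : (2:ℝ)^(k+1) * (A k : ℝ) ≤ (4:ℝ)^(k+1) * (Br k / 2) :=
      mul_le_mul h1 h2 (le_of_lt (hApos k)) (le_of_lt h7)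
    nlinarith [hBrpos k]
  have hBgrow2 : ∀ k, 2 * (2:ℝ)^((k+1)^2) * Br k ≤ Br (k+1) := by
    intro k
    have h4 : (4:ℝ)^((k+1)^2+1) * Br k ≤ Br (k+1) := hBrgrow k ((k+1)^2)
      (by have e1 : (k+1)^2 = k*k+2*k+1 := by ring
          have e2 : (k+6)^2 = k*k+12*k+36 := by ring
          omega)
    have h1 : (2:ℝ)^((k+1)^2) ≤ 4^((k+1)^2) := pow_le_pow_left₀ (by norm_num) (by norm_num) _
    have h5 : (4:ℝ)^((k+1)^2+1) = 4^((k+1)^2) * 4 := by rw [pow_succ]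
    nlinarith [hBrpos k, pow_pos (by norm_num : (0:ℝ) < 2) ((k+1)^2)]
  -- b construction
  have hbex : ∃ b : ℝ, ∀ k, ∃ N : ℤ,
      (A k : ℝ) * b - N ∈ Set.Icc (((2:ℝ)^(k+1))⁻¹) (2 * ((2:ℝ)^(k+1))⁻¹) := by
    obtain ⟨b, _, _, hb⟩ := nested
      (fun k => match k with | 0 => (4:ℝ) | j+1 => (A j : ℝ))
      (fun _ => 0) (fun k => ((2:ℝ)^k)⁻¹)
      (fun k => hA1 k)
      (fun k => inv_pos.mpr (pow_pos (by norm_num) _))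
      (fun k => by
        rw [show (1/2:ℝ) = (2:ℝ)⁻¹ by norm_num]
        apply inv_anti₀ (by norm_num)
        calc (2:ℝ) = 2^1 := by norm_num
          _ ≤ _ := pow_le_pow_right₀ (by norm_num) (by omega))
      (fun k => by
        show 2 / (A (k+1) : ℝ) ≤ ((2:ℝ)^(k+1))⁻¹ / (A k : ℝ)
        rw [div_le_div_iff₀ (hApos (k+1)) (hApos k), inv_mul_eq_div,
          le_div_iff₀ (pow_pos (by norm_num) _)]
        have := hAgrow k
        nlinarith [hApos k])
    refine ⟨b, fun k => ?_⟩
    obtain ⟨N, hN⟩ := hb k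
    exact ⟨N, by simpa using hN⟩
  obtain ⟨b, hbspec⟩ := hbex
  choose Nb hNb using hbspec
  set y : ℕ → ℝ := fun k => (A k : ℝ) * b - Nb k with hydef
  have hy1 : ∀ k, ((2:ℝ)^(k+1))⁻¹ ≤ y k := fun k => (Set.mem_Icc.mp (hNb k)).1
  have hy2 : ∀ k, y k ≤ 2 * ((2:ℝ)^(k+1))⁻¹ := fun k => (Set.mem_Icc.mp (hNb k)).2
  have hypos : ∀ k, 0 < y k := fun k => lt_of_lt_of_le (by positivity) (hy1 k)
  -- d construction
  have hdex : ∃ d : ℝ, ∀ k, ∃ Z : ℤ,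
      Br k * d + (A k : ℝ) * b - Z ∈ Set.Icc (((2:ℝ)^((k+1)^2))⁻¹) (2 * ((2:ℝ)^((k+1)^2))⁻¹) := by
    obtain ⟨d, _, _, hd⟩ := nested
      (fun k => match k with | 0 => (4:ℝ) | j+1 => Br j)
      (fun k => match k with | 0 => (0:ℝ) | j+1 => (A j : ℝ) * b)
      (fun k => ((2:ℝ)^(k^2))⁻¹)
      (fun k => le_trans (by norm_num) (hBr16 k))
      (fun k => inv_pos.mpr (pow_pos (by norm_num) _))
      (fun k => by
        rw [show (1/2:ℝ) = (2:ℝ)⁻¹ by norm_num]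
        apply inv_anti₀ (by norm_num)
        calc (2:ℝ) = 2^1 := by norm_num
          _ ≤ _ := pow_le_pow_right₀ (by norm_num) (Nat.one_le_pow _ _ (by omega)))
      (fun k => by
        show 2 / Br (k+1) ≤ ((2:ℝ)^((k+1)^2))⁻¹ / Br k
        rw [div_le_div_iff₀ (hBrpos (k+1)) (hBrpos k), inv_mul_eq_div,
          le_div_iff₀ (pow_pos (by norm_num) _)]
        have := hBgrow2 k
        nlinarith [hBrpos k])
    refine ⟨d, fun k => ?_⟩
    obtain ⟨Z, hZ⟩ := hd k
    exact ⟨Z, by simpa using hZ⟩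
  obtain ⟨d, hdspec⟩ := hdex
  choose Zd hZd using hdspec
  set zz : ℕ → ℝ := fun k => Br k * d + (A k : ℝ) * b - Zd k with hzzdef
  have hzz1 : ∀ k, ((2:ℝ)^((k+1)^2))⁻¹ ≤ zz k := fun k => (Set.mem_Icc.mp (hZd k)).1
  have hzz2 : ∀ k, zz k ≤ 2 * ((2:ℝ)^((k+1)^2))⁻¹ := fun k => (Set.mem_Icc.mp (hZd k)).2
  have hzzpos : ∀ k, 0 < zz k := fun k => lt_of_lt_of_le (by positivity) (hzz1 k)
  -- the numbers
  set ξ : ℂ := Complex.exp (1 + ((2*Real.pi*b : ℝ) : ℂ) * Complex.I) with hξdef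
  set η : ℂ := Complex.exp (((-γ : ℝ) : ℂ) + ((2*Real.pi*d : ℝ) : ℂ) * Complex.I) with hηdef
  have hξne : ξ ≠ 0 := Complex.exp_ne_zero _
  have hηne : η ≠ 0 := Complex.exp_ne_zero _
  set Bi : ℕ → ℤ := fun k => (4:ℤ)^(Nat.factorial (k+6)) with hBidef
  have hBicast : ∀ k, ((Bi k : ℤ) : ℝ) = Br k := by
    intro k; rw [hBidef, hBrdef]; push_cast; norm_num
  -- product form
  have hprod : ∀ (t : ℤ) (k : ℕ), ξ ^ (t * A k) * η ^ (t * Bi k)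
      = Complex.exp (((-(t * (Br k * γ - A k)) : ℝ) : ℂ)
        + ((2*Real.pi*(t * zz k) : ℝ) : ℂ) * Complex.I) := by
    intro t k
    have e1 : ξ ^ (t * A k)
        = Complex.exp (((t * A k : ℤ):ℂ) * (1 + ((2*Real.pi*b:ℝ):ℂ) * Complex.I)) := by
      rw [hξdef, Complex.exp_int_mul]
    have e2 : η ^ (t * Bi k)
        = Complex.exp (((t * Bi k : ℤ):ℂ) * (((-γ:ℝ):ℂ) + ((2*Real.pi*d:ℝ):ℂ) * Complex.I)) := by
      rw [hηdef, Complex.exp_int_mul]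
    rw [e1, e2, ← Complex.exp_add]
    have hkey : ((t * A k : ℤ):ℂ) * (1 + ((2*Real.pi*b:ℝ):ℂ) * Complex.I)
        + ((t * Bi k : ℤ):ℂ) * (((-γ:ℝ):ℂ) + ((2*Real.pi*d:ℝ):ℂ) * Complex.I)
        = (((-(t * (Br k * γ - A k)) : ℝ) : ℂ) + ((2*Real.pi*(t * zz k) : ℝ) : ℂ) * Complex.I)
          + ((t * Zd k : ℤ):ℂ) * (2 * (Real.pi:ℂ) * Complex.I) := by
      simp only [hzzdef, hBrdef, hBidef]
      push_cast
      ring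
    rw [hkey, Complex.exp_add, Complex.exp_int_mul_two_pi_mul_I, mul_one]
  -- unit form
  have habsξ : (‖ξ‖ : ℂ) = Complex.exp 1 := by
    have h1 : ‖ξ‖ = Real.exp 1 := by
      rw [hξdef, Complex.norm_exp]
      congr 1
      simp
    rw [h1, Complex.ofReal_exp]
    norm_num
  have hunitpow : ∀ (t : ℤ) (k : ℕ), (ξ / (‖ξ‖ : ℂ)) ^ (t * A k)
      = Complex.exp (((0 : ℝ) : ℂ) + ((2*Real.pi*(t * y k) : ℝ) : ℂ) * Complex.I) := by
    intro t k
    have hdiv : ξ / (‖ξ‖ : ℂ) = Complex.exp (((2*Real.pi*b:ℝ):ℂ) * Complex.I) := by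
      rw [habsξ, hξdef, ← Complex.exp_sub]
      congr 1
      ring
    rw [hdiv, ← Complex.exp_int_mul]
    have hkey2 : ((t * A k : ℤ):ℂ) * (((2*Real.pi*b:ℝ):ℂ) * Complex.I)
        = (((0 : ℝ) : ℂ) + ((2*Real.pi*(t * y k) : ℝ) : ℂ) * Complex.I)
          + ((t * Nb k : ℤ):ℂ) * (2 * (Real.pi:ℂ) * Complex.I) := by
      simp only [hydef]
      push_cast
      ring
    rw [hkey2, Complex.exp_add, Complex.exp_int_mul_two_pi_mul_I, mul_one]
  -- dense
  have hcirc : ∀ u : ℂ, ‖u‖ = 1 →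
      u ∈ closure {w : ℂ | ∃ m n : ℤ, w = ξ ^ m * η ^ n} := by
    intro u hu
    have hπ : (0:ℝ) < Real.pi := Real.pi_pos
    set β : ℝ := Complex.arg u / (2*Real.pi) with hβdef
    set t' : ℕ → ℤ := fun k => round (β / zz k) with ht'def
    have ht'abs : ∀ k, |(t' k : ℝ)| ≤ (|β| + 1) * (2:ℝ)^((k+1)^2) := by
      intro k
      have h1 : |β / zz k| ≤ |β| * (2:ℝ)^((k+1)^2) := by
        rw [abs_div, abs_of_pos (hzzpos k)]
        calc |β| / zz k ≤ |β| / ((2:ℝ)^((k+1)^2))⁻¹ :=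
            div_le_div₀ (abs_nonneg _) (le_refl _) (by positivity) (hzz1 k)
          _ = |β| * (2:ℝ)^((k+1)^2) := by rw [div_eq_mul_inv, inv_inv]
      have h2 := round_le_abs (β / zz k)
      have h3 : (1:ℝ) ≤ (2:ℝ)^((k+1)^2) := by
        have h4 : (2:ℝ)^0 ≤ (2:ℝ)^((k+1)^2) := pow_le_pow_right₀ (by norm_num) (by positivity)
        simpa using h4
      rw [ht'def]
      simp only
      nlinarith [abs_nonneg β]
    have l1' : Tendsto (fun k => (-((t' k:ℝ) * (Br k * γ - (A k:ℝ))) : ℝ)) atTop (𝓝 0) := by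
      apply tendsto_geo (by norm_num : (1:ℝ) < 4) (2*(|β|+1))
      intro k
      rw [abs_neg, abs_mul]
      have h2 : |Br k * γ - (A k:ℝ)| ≤ 2 * τε k := by
        rw [abs_of_pos (hε1 k)]; exact hε2 k
      have hmono : (2:ℝ)^((k+1)^2) * τε k ≤ ((4:ℝ)^k)⁻¹ := by
        have ha : (2:ℝ)^((k+1)^2) * τε k ≤ (4:ℝ)^((k+1)^2) * ((4:ℝ)^((k+6)^2))⁻¹ := by
          simp only [hτεdef]
          exact mul_le_mul (pow_le_pow_left₀ (by norm_num) (by norm_num) _)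
            (le_refl _) (by positivity) (by positivity)
        have hb : (4:ℝ)^((k+1)^2) * ((4:ℝ)^((k+6)^2))⁻¹ ≤ ((4:ℝ)^k)⁻¹ := by
          apply le_inv_pow (by norm_num)
          have e1 : (k+1)^2 = k*k+2*k+1 := by ring
          have e2 : (k+6)^2 = k*k+12*k+36 := by ring
          omega
        linarith
      calc |(t' k:ℝ)| * |Br k * γ - (A k:ℝ)|
          ≤ ((|β|+1) * (2:ℝ)^((k+1)^2)) * (2 * τε k) :=
            mul_le_mul (ht'abs k) h2 (abs_nonneg _) (by positivity)
        _ = (2*(|β|+1)) * ((2:ℝ)^((k+1)^2) * τε k) := by ring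
        _ ≤ (2*(|β|+1)) * ((4:ℝ)^k)⁻¹ :=
            mul_le_mul_of_nonneg_left hmono (by positivity)
    have l2' : Tendsto (fun k => ((t' k:ℝ) * zz k : ℝ)) atTop (𝓝 β) := by
      have l2b : Tendsto (fun k => ((t' k:ℝ) * zz k - β : ℝ)) atTop (𝓝 0) := by
        apply tendsto_geo (by norm_num : (1:ℝ) < 2) 1
        intro k
        have hstep : (t' k:ℝ) * zz k - β = ((round (β / zz k):ℝ) - β / zz k) * zz k := by
          rw [ht'def]
          simp only
          rw [sub_mul, div_mul_cancel₀ _ (ne_of_gt (hzzpos k))]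
        rw [hstep, abs_mul, abs_sub_comm]
        have h1 := abs_sub_round (β / zz k)
        have h2 : |zz k| ≤ 2 * ((2:ℝ)^((k+1)^2))⁻¹ := by
          rw [abs_of_pos (hzzpos k)]; exact hzz2 k
        calc |β / zz k - (round (β / zz k):ℝ)| * |zz k|
            ≤ (1/2) * (2 * ((2:ℝ)^((k+1)^2))⁻¹) :=
              mul_le_mul h1 h2 (abs_nonneg _) (by norm_num)
          _ = ((2:ℝ)^((k+1)^2))⁻¹ := by ring
          _ ≤ 1 * ((2:ℝ)^k)⁻¹ := by
              rw [one_mul]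
              apply inv_anti₀ (by positivity)
              exact pow_le_pow_right₀ (by norm_num) (by
                have e1 : (k+1)^2 = k*k+2*k+1 := by ring
                omega)
      have := l2b.add_const β
      simpa using this
    have l2 : Tendsto (fun k => (2*Real.pi*((t' k:ℝ) * zz k) : ℝ)) atTop (𝓝 (Complex.arg u)) := by
      have hβeq : 2*Real.pi*β = Complex.arg u := by rw [hβdef]; field_simp
      have := l2'.const_mul (2*Real.pi)
      rwa [hβeq] at this
    have T2 : Tendsto (fun k => ξ^(t' k * A k) * η^(t' k * Bi k)) atTop (𝓝 u) := by
      have heq : (fun k => ξ^(t' k * A k) * η^(t' k * Bi k))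
          = fun k => Complex.exp (((-((t' k:ℝ) * (Br k * γ - (A k:ℝ))) : ℝ):ℂ)
            + ((2*Real.pi*((t' k:ℝ) * zz k):ℝ):ℂ) * Complex.I) := funext fun k => hprod (t' k) k
      rw [heq]
      have T := texp _ _ 0 (Complex.arg u) l1' l2
      have hequ : Complex.exp (((0:ℝ):ℂ) + ((Complex.arg u : ℝ):ℂ) * Complex.I) = u := by
        rw [Complex.ofReal_zero, zero_add]
        have h := Complex.norm_mul_exp_arg_mul_I u
        rw [hu] at h
        simpa using h
      rwa [hequ] at T
    exact mem_closure_of_tendsto T2 (Filter.Eventually.of_forall fun k => ⟨t' k * A k, t' k * Bi k, rfl⟩)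
  have hdense : Dense {w : ℂ | ∃ m n : ℤ, w = ξ ^ m * η ^ n} := by
    have hirr : ∀ n₀ m₀ : ℤ, (n₀:ℝ) * γ = m₀ → n₀ = 0 := by
      intro n₀ m₀ hnm
      by_contra hn0
      obtain ⟨K, hK⟩ := pow_unbounded_of_one_lt (2*|(n₀:ℝ)| : ℝ) (by norm_num : (1:ℝ) < 4)
      have hJ : (Br K * γ - (A K:ℝ)) * (n₀:ℝ) = ((Bi K * m₀ - A K * n₀ : ℤ) : ℝ) := by
        push_cast
        rw [hBicast K]
        linear_combination (Br K) * hnm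
      have hprodne : (Br K * γ - (A K:ℝ)) * (n₀:ℝ) ≠ 0 :=
        mul_ne_zero (ne_of_gt (hε1 K)) (Int.cast_ne_zero.mpr hn0)
      have hJne : (Bi K * m₀ - A K * n₀ : ℤ) ≠ 0 := by
        intro h0
        apply hprodne
        rw [hJ, h0]
        norm_num
      have hJ1 : (1:ℝ) ≤ |((Bi K * m₀ - A K * n₀ : ℤ) : ℝ)| := by
        have h1 : (1:ℤ) ≤ |Bi K * m₀ - A K * n₀| := Int.one_le_abs hJne
        calc (1:ℝ) = ((1:ℤ):ℝ) := by norm_num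
          _ ≤ ((|Bi K * m₀ - A K * n₀|:ℤ):ℝ) := by exact_mod_cast h1
          _ = |((Bi K * m₀ - A K * n₀ : ℤ) : ℝ)| := by push_cast; ring
      have hsmall : |((Bi K * m₀ - A K * n₀ : ℤ) : ℝ)| < 1 := by
        rw [← hJ, abs_mul]
        have h1 : |Br K * γ - (A K:ℝ)| ≤ 2 * τε K := by
          rw [abs_of_pos (hε1 K)]; exact hε2 K
        have hX : (0:ℝ) < 4^((K+6)^2) := by positivity
        have h3 : (4:ℝ)^K ≤ 4^((K+6)^2) := pow4_mono (by
          have e2 : (K+6)^2 = K*K+12*K+36 := by ring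
          omega)
        have h4 : 2*|(n₀:ℝ)| < 4^((K+6)^2) := lt_of_lt_of_le hK h3
        have h2 : 2 * τε K * |(n₀:ℝ)| < 1 := by
          simp only [hτεdef]
          have heq : 2 * ((4:ℝ)^((K+6)^2))⁻¹ * |(n₀:ℝ)| = (2*|(n₀:ℝ)|) / 4^((K+6)^2) := by
            field_simp
          rw [heq, div_lt_one hX]
          exact h4
        calc |Br K*γ - (A K:ℝ)| * |(n₀:ℝ)| ≤ 2*τε K * |(n₀:ℝ)| :=
            mul_le_mul_of_nonneg_right h1 (abs_nonneg _)
          _ < 1 := h2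
      linarith
    have hSadd : Dense ((AddSubgroup.closure {(1:ℝ), -γ} : AddSubgroup ℝ) : Set ℝ) := by
      rcases AddSubgroup.dense_or_cyclic (AddSubgroup.closure {(1:ℝ), -γ}) with h | ⟨a, ha⟩
      · exact h
      · exfalso
        have h1 : (1:ℝ) ∈ AddSubgroup.closure {(1:ℝ), -γ} :=
          AddSubgroup.subset_closure (by simp)
        have h2 : (-γ) ∈ AddSubgroup.closure {(1:ℝ), -γ} :=
          AddSubgroup.subset_closure (by simp)
        rw [ha, AddSubgroup.mem_closure_singleton] at h1 h2
        obtain ⟨n₁, hn₁⟩ := h1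
        obtain ⟨m₁, hm₁⟩ := h2
        rw [zsmul_eq_mul] at hn₁ hm₁
        have key : ((n₁:ℝ)) * γ = ((-m₁ : ℤ):ℝ) := by
          push_cast
          linear_combination (n₁:ℝ) * hm₁ - (m₁:ℝ) * hn₁
        have hn₁0 : n₁ = 0 := hirr n₁ (-m₁) key
        rw [hn₁0] at hn₁
        norm_num at hn₁
    intro w
    by_cases hw : w = 0
    · subst hw
      apply mem_closure_of_tendsto (f := fun j : ℕ => η ^ (j:ℤ)) (b := atTop)
      · rw [tendsto_zero_iff_norm_tendsto_zero]
        have habsη : ∀ j : ℕ, ‖η ^ (j:ℤ)‖ = Real.exp (-γ) ^ j := by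
          intro j
          rw [zpow_natCast, norm_pow, hηdef, Complex.norm_exp]
          congr 2
          simp
        simp only [habsη]
        apply tendsto_pow_atTop_nhds_zero_of_lt_one (Real.exp_nonneg _)
        rw [Real.exp_lt_one_iff]
        linarith
      · exact Filter.Eventually.of_forall fun j => ⟨0, (j:ℤ), by simp⟩
    · rw [Metric.mem_closure_iff]
      intro ε hε
      set R := ‖w‖ with hRdef
      have hR : 0 < R := by
        rw [hRdef]; exact norm_pos_iff.mpr hw
      set ε' := min (ε/2) 1 with hε'def
      have hε'pos : 0 < ε' := lt_min (by linarith) one_pos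
      have hcont := Real.continuous_exp.continuousAt (x := Real.log R)
      rw [Metric.continuousAt_iff] at hcont
      obtain ⟨δ, hδ, hδprop⟩ := hcont ε' hε'pos
      obtain ⟨v, hvmem, hvd⟩ := Metric.mem_closure_iff.mp (hSadd (Real.log R)) δ hδ
      obtain ⟨p, q, hpq⟩ := AddSubgroup.mem_closure_pair.mp hvmem
      rw [zsmul_eq_mul, zsmul_eq_mul] at hpq
      set E := Real.exp ((p:ℝ) - q * γ) with hEdef
      have hEpos : 0 < E := Real.exp_pos _
      have hvE : |E - R| < ε' := by
        have h1 : dist ((p:ℝ) - q*γ) (Real.log R) < δ := by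
          rw [show (p:ℝ) - q*γ = v by linarith [hpq]]
          rw [dist_comm]; exact hvd
        have h2 := hδprop h1
        rwa [Real.dist_eq, Real.exp_log hR] at h2
      set v0 := ξ^p * η^q with hv0def
      have hform : v0 = Complex.exp ((((p:ℝ) - q*γ : ℝ):ℂ)
          + ((2*Real.pi*(p*b + q*d) : ℝ):ℂ) * Complex.I) := by
        rw [hv0def, hξdef, hηdef, ← Complex.exp_int_mul _ p, ← Complex.exp_int_mul _ q,
          ← Complex.exp_add]
        congr 1
        push_cast
        ring
      have habsv0 : ‖v0‖ = E := by
        rw [hform, Complex.norm_exp, hEdef]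
        congr 1
        simp
      have hv0ne : v0 ≠ 0 := by rw [hform]; exact Complex.exp_ne_zero _
      have hRne : ((R:ℝ):ℂ) ≠ 0 := Complex.ofReal_ne_zero.mpr (ne_of_gt hR)
      set u₀ := (w * ((E:ℝ):ℂ)) / (v0 * ((R:ℝ):ℂ)) with hu₀def
      have habsu₀ : ‖u₀‖ = 1 := by
        rw [hu₀def, norm_div, norm_mul, norm_mul, habsv0]
        simp only [Complex.norm_real, Real.norm_eq_abs]
        rw [abs_of_pos hEpos, abs_of_pos hR, ← hRdef]
        field_simp
      obtain ⟨g, hgmem, hgd⟩ := Metric.mem_closure_iff.mp (hcirc u₀ habsu₀) (ε/(2*(R+1)))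
        (div_pos hε (by linarith))
      obtain ⟨pg, qg, hg⟩ := hgmem
      refine ⟨v0 * g, ⟨p + pg, q + qg, by
        rw [hg, hv0def, zpow_add₀ hξne, zpow_add₀ hηne]; ring⟩, ?_⟩
      have hv0u : v0 * u₀ = w * (((E:ℝ):ℂ)/((R:ℝ):ℂ)) := by
        rw [hu₀def]
        field_simp
      have h1 : ‖w - v0*u₀‖ = |R - E| := by
        have hstep : w - w * (((E:ℝ):ℂ)/((R:ℝ):ℂ)) = w * (((R - E : ℝ):ℂ)/((R:ℝ):ℂ)) := by
          push_cast
          field_simp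
        rw [hv0u, hstep, norm_mul, norm_div]
        simp only [Complex.norm_real, Real.norm_eq_abs]
        rw [← hRdef,
          abs_of_pos hR]
        field_simp
      have h2 : ‖v0*u₀ - v0*g‖ ≤ E * (ε/(2*(R+1))) := by
        rw [← mul_sub, norm_mul, habsv0]
        apply mul_le_mul_of_nonneg_left ?_ (le_of_lt hEpos)
        rw [← Complex.dist_eq]
        exact le_of_lt hgd
      have hEle : E ≤ R + 1 := by
        have h3 : |E - R| < 1 := lt_of_lt_of_le hvE (min_le_right _ _)
        have h4 := abs_lt.mp h3
        linarith [h4.2]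
      calc dist w (v0*g) ≤ dist w (v0*u₀) + dist (v0*u₀) (v0*g) := dist_triangle _ _ _
        _ < ε := by
          rw [Complex.dist_eq, Complex.dist_eq, h1]
          have h3 : |R - E| < ε' := by rwa [abs_sub_comm] at hvE
          have h4 : ‖v0*u₀ - v0*g‖ ≤ (R+1) * (ε/(2*(R+1))) := by
            refine le_trans h2 (mul_le_mul_of_nonneg_right hEle ?_)
            exact le_of_lt (div_pos hε (by linarith))
          have h5 : (R+1) * (ε/(2*(R+1))) = ε/2 := by
            field_simp
          have h6 : ε' ≤ ε/2 := min_le_left _ _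
          linarith
  refine ⟨ξ, η, hξne, hηne, hdense, ?_⟩
  -- H part
  intro z hz
  set θ : ℝ := Complex.arg z / (2*Real.pi) with hθdef
  have hπ : (0:ℝ) < Real.pi := Real.pi_pos
  have hθabs : |θ| ≤ 1/2 := by
    rw [hθdef, abs_div, abs_of_pos (by positivity : (0:ℝ) < 2*Real.pi),
      div_le_iff₀ (by positivity : (0:ℝ) < 2*Real.pi)]
    calc |Complex.arg z| ≤ Real.pi := Complex.abs_arg_le_pi z
      _ = 1/2*(2*Real.pi) := by ring
  set t : ℕ → ℤ := fun k => round (θ / y k) with htdef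
  have htabs : ∀ k, |(t k : ℝ)| ≤ (2:ℝ)^(k+1) := by
    intro k
    have h1 : |θ / y k| ≤ (1/2) * (2:ℝ)^(k+1) := by
      rw [abs_div, abs_of_pos (hypos k)]
      calc |θ| / y k ≤ (1/2) / ((2:ℝ)^(k+1))⁻¹ :=
          div_le_div₀ (by norm_num) hθabs (by positivity) (hy1 k)
        _ = (1/2) * (2:ℝ)^(k+1) := by rw [div_eq_mul_inv, inv_inv]
    have h2 := round_le_abs (θ / y k)
    have h3 : (1:ℝ) ≤ (2:ℝ)^(k+1) := by
      have h4 : (2:ℝ)^0 ≤ (2:ℝ)^(k+1) := pow_le_pow_right₀ (by norm_num) (by omega)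
      simpa using h4
    rw [htdef]
    simp only
    linarith
  have l1 : Tendsto (fun k => (-(↑(t k) * (Br k * γ - ↑(A k))) : ℝ)) atTop (𝓝 0) := by
    apply tendsto_geo (by norm_num : (1:ℝ) < 4) 4
    intro k
    rw [abs_neg, abs_mul]
    have h2 : |Br k * γ - ↑(A k)| ≤ 2 * τε k := by
      rw [abs_of_pos (hε1 k)]; exact hε2 k
    calc |(t k:ℝ)| * |Br k * γ - ↑(A k)| ≤ (2:ℝ)^(k+1) * (2 * τε k) :=
        mul_le_mul (htabs k) h2 (abs_nonneg _) (by positivity)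
      _ ≤ (4:ℝ)^(k+1) * (2 * τε k) := by
          have h4 : (2:ℝ)^(k+1) ≤ 4^(k+1) := pow_le_pow_left₀ (by norm_num) (by norm_num) _
          nlinarith [hτεpos k]
      _ = 2 * ((4:ℝ)^(k+1) * ((4:ℝ)^((k+6)^2))⁻¹) := by simp only [hτεdef]; ring
      _ ≤ 2 * ((4:ℝ)^k)⁻¹ := by
          have h5 := le_inv_pow (by norm_num : (1:ℝ) ≤ 4) (show (k+1) + k ≤ (k+6)^2 by
            have e2 : (k+6)^2 = k*k+12*k+36 := by ring
            omega)
          linarith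
      _ ≤ 4 * ((4:ℝ)^k)⁻¹ := by
          have : (0:ℝ) < ((4:ℝ)^k)⁻¹ := by positivity
          linarith
  have l2' : Tendsto (fun k => ((t k : ℝ) * zz k : ℝ)) atTop (𝓝 0) := by
    apply tendsto_geo (by norm_num : (1:ℝ) < 2) 4
    intro k
    rw [abs_mul]
    have h2 : |zz k| ≤ 2 * ((2:ℝ)^((k+1)^2))⁻¹ := by
      rw [abs_of_pos (hzzpos k)]; exact hzz2 k
    calc |(t k:ℝ)| * |zz k| ≤ (2:ℝ)^(k+1) * (2 * ((2:ℝ)^((k+1)^2))⁻¹) :=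
        mul_le_mul (htabs k) h2 (abs_nonneg _) (by positivity)
      _ = 2 * ((2:ℝ)^(k+1) * ((2:ℝ)^((k+1)^2))⁻¹) := by ring
      _ ≤ 2 * ((2:ℝ)^k)⁻¹ := by
          have h5 := le_inv_pow (by norm_num : (1:ℝ) ≤ 2) (show (k+1) + k ≤ (k+1)^2 by
            have e2 : (k+1)^2 = k*k+2*k+1 := by ring
            omega)
          linarith
      _ ≤ 4 * ((2:ℝ)^k)⁻¹ := by
          have : (0:ℝ) < ((2:ℝ)^k)⁻¹ := by positivity
          linarith
  have l2 : Tendsto (fun k => (2*Real.pi*((t k : ℝ) * zz k) : ℝ)) atTop (𝓝 0) := by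
    have h := l2'.const_mul (2*Real.pi)
    rwa [mul_zero] at h
  have l3b : Tendsto (fun k => ((t k : ℝ) * y k - θ : ℝ)) atTop (𝓝 0) := by
    apply tendsto_geo (by norm_num : (1:ℝ) < 2) 1
    intro k
    have hstep : (t k : ℝ) * y k - θ = ((round (θ / y k):ℝ) - θ / y k) * y k := by
      rw [htdef]
      simp only
      rw [sub_mul, div_mul_cancel₀ _ (ne_of_gt (hypos k))]
    rw [hstep, abs_mul, abs_sub_comm]
    have h1 := abs_sub_round (θ / y k)
    have h2 : |y k| ≤ 2 * ((2:ℝ)^(k+1))⁻¹ := by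
      rw [abs_of_pos (hypos k)]; exact hy2 k
    calc |θ / y k - (round (θ / y k):ℝ)| * |y k| ≤ (1/2) * (2 * ((2:ℝ)^(k+1))⁻¹) :=
        mul_le_mul h1 h2 (abs_nonneg _) (by norm_num)
      _ = ((2:ℝ)^(k+1))⁻¹ := by ring
      _ ≤ 1 * ((2:ℝ)^k)⁻¹ := by
          rw [one_mul]
          apply inv_anti₀ (by positivity)
          exact pow_le_pow_right₀ (by norm_num) (by omega)
  have l3c : Tendsto (fun k => ((t k : ℝ) * y k : ℝ)) atTop (𝓝 θ) := by
    have := l3b.add_const θ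
    simpa using this
  have hθeq : 2*Real.pi*θ = Complex.arg z := by
    rw [hθdef]; field_simp
  have l3 : Tendsto (fun k => (2*Real.pi*((t k:ℝ) * y k) : ℝ)) atTop (𝓝 (Complex.arg z)) := by
    have := l3c.const_mul (2*Real.pi)
    rwa [hθeq] at this
  refine ⟨fun k => t k * A k, fun k => t k * Bi k, ?_, ?_⟩
  · have heq : (fun k => ξ^(t k * A k) * η^(t k * Bi k))
        = fun k => Complex.exp (((-((t k:ℝ) * (Br k * γ - (A k:ℝ))) : ℝ):ℂ)
          + ((2*Real.pi*((t k:ℝ) * zz k):ℝ):ℂ) * Complex.I) := funext fun k => hprod (t k) k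
    rw [heq]
    have T := texp _ _ 0 0 l1 l2
    simpa using T
  · have heq2 : (fun k => (ξ / (‖ξ‖:ℂ))^(t k * A k))
        = fun k => Complex.exp (((0:ℝ):ℂ) + ((2*Real.pi*((t k:ℝ) * y k):ℝ):ℂ) * Complex.I)
        := funext fun k => hunitpow (t k) k
    rw [heq2]
    have T := texp _ _ 0 (Complex.arg z) tendsto_const_nhds l3
    have hzz3 : Complex.exp (((0:ℝ):ℂ) + ((Complex.arg z : ℝ):ℂ) * Complex.I) = z := by
      rw [Complex.ofReal_zero, zero_add]
      have h := Complex.norm_mul_exp_arg_mul_I z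
      rw [hz] at h
      simpa using h
    rw [hzz3] at T
    exact T


end SecondAux

/-- For nonzero ξ, η, `Hset ξ η` is the set of z with |z| = 1 for which there
are integer sequences (n_k), (m_k) with ξ^{n_k} · η^{m_k} → 1 and
(ξ/|ξ|)^{n_k} → z. -/
def Hset (ξ η : ℂ) : Set ℂ :=
  {z : ℂ | ‖z‖ = 1 ∧ ∃ n m : ℕ → ℤ,
    Tendsto (fun k => ξ ^ (n k) * η ^ (m k)) atTop (𝓝 1) ∧
    Tendsto (fun k => (ξ / (‖ξ‖ : ℂ)) ^ (n k)) atTop (𝓝 z)}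

/-- There exist nonzero ξ, η ∈ ℂ such that {ξ^m η^n : m, n ∈ ℤ}
is dense in ℂ and H(ξ,η) equals the whole unit circle. -/
theorem exists_second_type_group :
    ∃ ξ η : ℂ, ξ ≠ 0 ∧ η ≠ 0 ∧
      Dense {z : ℂ | ∃ m n : ℤ, z = ξ ^ m * η ^ n} ∧
      Hset ξ η = {z : ℂ | ‖z‖ = 1} := by
  obtain ⟨ξ, η, hξ, hη, hd, hH⟩ := SecondAux.construction
  refine ⟨ξ, η, hξ, hη, hd, ?_⟩
  ext z
  simp only [Hset, Set.mem_setOf_eq]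
  constructor
  · exact fun h => h.1
  · exact fun h => ⟨h, hH z h⟩
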